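/- A maximal ancestral graph H is Markov equivalent to some bidirected graph if and only if H contains no unshielded non-collider V-configuration. -/

import Mathlib

/-- A loopless mixed graph with three kinds of edges: lines (undirected),
arrows (directed, `arrow i j` means `i → j`), and arcs (bidirected). -/
structure MixedGraph (V : Type*) where
  line : V → V → Prop
  arrow : V → V → Prop
  arc : V → V → Prop
  line_symm : ∀ i j, line i j → line j i
  arc_symm : ∀ i j, arc i j → arc j i
  line_irrefl : ∀ i, ¬ line i i
  arrow_irrefl : ∀ i, ¬ arrow i i
  arc_irrefl : ∀ i, ¬ arc i i

namespace MixedGraph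

variable {V : Type*}

/-- `i` and `j` are adjacent (joined by some edge). -/
def adj (G : MixedGraph V) (i j : V) : Prop :=
  G.line i j ∨ G.arrow i j ∨ G.arrow j i ∨ G.arc i j

/-- There is an edge between `i` and `j` with an arrowhead pointing at `j`. -/
def headAt (G : MixedGraph V) (i j : V) : Prop :=
  G.arrow i j ∨ G.arc i j

/-- `j` is a collider on the V-configuration `⟨i, j, k⟩`. -/
def collider (G : MixedGraph V) (i j k : V) : Prop :=
  G.headAt i j ∧ G.headAt k j

/-- `i` is an ancestor of `j` (a direction-preserving path of arrows from `i` to `j`). -/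
def anc (G : MixedGraph V) (i j : V) : Prop :=
  Relation.ReflTransGen G.arrow i j

/-- A path: a list of pairwise distinct nodes, consecutive ones adjacent. -/
def isPath (G : MixedGraph V) (p : List V) : Prop :=
  p.Nodup ∧ List.Chain' G.adj p

/-- Inner-node condition for an `m`-connecting path given `C`:
every collider inner node is in `C` or an ancestor of a node of `C`,
every non-collider inner node is outside `C`. -/
def innerOK (G : MixedGraph V) (C : Set V) : List V → Prop
  | a :: b :: c :: rest =>
      ((G.collider a b c → b ∈ C ∨ ∃ x ∈ C, G.anc b x) ∧
        (¬ G.collider a b c → b ∉ C)) ∧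
      innerOK G C (b :: c :: rest)
  | _ => True

/-- `p` is an `m`-connecting path between `i` and `j` given `C`. -/
def mConnecting (G : MixedGraph V) (C : Set V) (i j : V) (p : List V) : Prop :=
  G.isPath p ∧ 2 ≤ p.length ∧ p.head? = some i ∧ p.getLast? = some j ∧
    G.innerOK C p

/-- `A` is `m`-separated from `B` given `C`. -/
def mSep (G : MixedGraph V) (A B C : Set V) : Prop :=
  ¬ ∃ (i j : V) (p : List V), i ∈ A ∧ j ∈ B ∧ G.mConnecting C i j p

/-- Two mixed graphs on the same node set are Markov equivalent if they induce
exactly the same `m`-separation statements among disjoint sets. -/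
def markovEquiv (G₁ G₂ : MixedGraph V) : Prop :=
  ∀ A B C : Set V, Disjoint A B → Disjoint A C → Disjoint B C →
    (G₁.mSep A B C ↔ G₂.mSep A B C)

/-- An undirected graph: only line edges. -/
def isUG (G : MixedGraph V) : Prop :=
  (∀ i j, ¬ G.arrow i j) ∧ (∀ i j, ¬ G.arc i j)

/-- A bidirected graph: only arc edges. -/
def isBG (G : MixedGraph V) : Prop :=
  (∀ i j, ¬ G.arrow i j) ∧ (∀ i j, ¬ G.line i j)

/-- A directed acyclic graph: only arrows, and no directed cycle. -/
def isDAG (G : MixedGraph V) : Prop :=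
  (∀ i j, ¬ G.line i j) ∧ (∀ i j, ¬ G.arc i j) ∧ ∀ i, ¬ Relation.TransGen G.arrow i i

/-- An ancestral graph: no node is an ancestor of one of its parents or spouses,
and no arrowhead points at a node having a neighbour. -/
def isAncestral (G : MixedGraph V) : Prop :=
  (∀ i j, (G.arrow j i ∨ G.arc j i) → ¬ G.anc i j) ∧
  (∀ i j k, G.line i j → ¬ G.headAt k i)

/-- Maximality: every pair of distinct non-adjacent nodes can be `m`-separated. -/
def isMaximal (G : MixedGraph V) : Prop :=
  ∀ i j, i ≠ j → ¬ G.adj i j → ∃ C : Set V, i ∉ C ∧ j ∉ C ∧ G.mSep {i} {j} C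

/-- A maximal ancestral graph. -/
def isMAG (G : MixedGraph V) : Prop :=
  G.isAncestral ∧ G.isMaximal

/-- Two graphs have the same skeleton. -/
def sameSkeleton (G₁ G₂ : MixedGraph V) : Prop :=
  ∀ i j, G₁.adj i j ↔ G₂.adj i j

/-- An unshielded collider V-configuration `⟨i, j, k⟩`. -/
def unshieldedCollider (G : MixedGraph V) (i j k : V) : Prop :=
  G.collider i j k ∧ i ≠ k ∧ ¬ G.adj i k

end MixedGraph

namespace MixedGraph
variable {V : Type*}

/-- An unshielded non-collider V-configuration `⟨i, j, k⟩`. -/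
def unshieldedNonCollider (G : MixedGraph V) (i j k : V) : Prop :=
  G.adj i j ∧ G.adj j k ∧ i ≠ k ∧ ¬ G.adj i k ∧ ¬ G.collider i j k

end MixedGraph


namespace MixedGraph
variable {V : Type*}

lemma adj_symm {G : MixedGraph V} {i j : V} (h : G.adj i j) : G.adj j i := by
  rcases h with h|h|h|h
  · exact Or.inl (G.line_symm _ _ h)
  · exact Or.inr (Or.inr (Or.inl h))
  · exact Or.inr (Or.inl h)
  · exact Or.inr (Or.inr (Or.inr (G.arc_symm _ _ h)))

lemma adj_ne {G : MixedGraph V} {i j : V} (h : G.adj i j) : i ≠ j := by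
  rintro rfl
  rcases h with h|h|h|h
  exacts [G.line_irrefl _ h, G.arrow_irrefl _ h, G.arrow_irrefl _ h, G.arc_irrefl _ h]

/-- The edge `b – c` has a tail at `b`. -/
def tailAt (G : MixedGraph V) (b c : V) : Prop := G.arrow b c ∨ G.line b c

lemma tailAt_adj {G : MixedGraph V} {b c : V} (h : G.tailAt b c) : G.adj b c := by
  rcases h with h|h
  · exact Or.inr (Or.inl h)
  · exact Or.inl h

lemma tailAt_of_not_head {G : MixedGraph V} {b c : V} (h : G.adj b c)
    (hh : ¬ G.headAt c b) : G.tailAt b c := by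
  rcases h with h|h|h|h
  · exact Or.inr h
  · exact Or.inl h
  · exact absurd (Or.inl h) hh
  · exact absurd (Or.inr (G.arc_symm _ _ h)) hh

variable {H : MixedGraph V}

lemma not_head_of_tail (hA : H.isAncestral) {b c : V} (h : H.tailAt b c) :
    ¬ H.headAt c b := by
  rcases h with h|h
  · intro hh
    exact hA.1 b c hh (Relation.ReflTransGen.single h)
  · exact hA.2 b c c h

lemma line_tail (hA : H.isAncestral) {b c x : V} (hl : H.line b c) (h : H.adj b x) :
    H.tailAt b x :=
  tailAt_of_not_head h (hA.2 b c x hl)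

lemma line_of_tails (hA : H.isAncestral) {b c : V} (h1 : H.tailAt b c) (h2 : H.tailAt c b) :
    H.line b c := by
  rcases h2 with h2|h2
  · exact absurd (Or.inl h2) (not_head_of_tail hA h1)
  · exact H.line_symm _ _ h2

lemma L1 (hA : H.isAncestral) (hU : ¬ ∃ i j k, H.unshieldedNonCollider i j k)
    {b c x : V} (hbc : H.tailAt b c) (hxb : H.adj x b) (hxc : x ≠ c) : H.adj x c := by
  by_contra hn
  exact hU ⟨x, b, c, hxb, tailAt_adj hbc, hxc, hn,
    fun hcol => not_head_of_tail hA hbc hcol.2⟩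

lemma L2 (hA : H.isAncestral) (hU : ¬ ∃ i j k, H.unshieldedNonCollider i j k)
    {a b c : V} (hab : H.tailAt a b) (hbc : H.tailAt b c) (hac : a ≠ c) : H.tailAt a c := by
  have hadj : H.adj a c := L1 hA hU hbc (tailAt_adj hab) hac
  rcases hab with hab|hab
  · rcases hbc with hbc|hbc
    · refine tailAt_of_not_head hadj ?_
      intro hh
      exact hA.1 a c hh ((Relation.ReflTransGen.single hab).tail hbc)
    · exact absurd (Or.inl hab) (hA.2 b c a hbc)
  · exact line_tail hA hab hadj

end MixedGraph

namespace MixedGraph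
variable {V : Type*} {H : MixedGraph V}

lemma L3 (hA : H.isAncestral) (hU : ¬ ∃ i j k, H.unshieldedNonCollider i j k)
    {b x : V} (h : H.anc b x) (hne : b ≠ x) : H.tailAt b x := by
  induction h using Relation.ReflTransGen.head_induction_on with
  | refl => exact absurd rfl hne
  | head hstep _ ih =>
    rename_i a y _
    by_cases hyx : y = x
    · subst hyx; exact Or.inl hstep
    · exact L2 hA hU (Or.inl hstep) (ih hyx) hne

end MixedGraph

section ListAux
variable {α : Type*}

/-- `(x, y, z)` is a window (three consecutive entries) of `l`. -/
def Win (l : List α) (x y z : α) : Prop := ∃ s t, l = s ++ x :: y :: z :: t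

lemma win_cons {a : α} {l : List α} {x y z : α} :
    Win (a :: l) x y z ↔ (a = x ∧ ∃ t, l = y :: z :: t) ∨ Win l x y z := by
  constructor
  · rintro ⟨s, t, h⟩
    cases s with
    | nil =>
      simp only [List.nil_append, List.cons.injEq] at h
      exact Or.inl ⟨h.1, t, h.2⟩
    | cons b s' =>
      simp only [List.cons_append, List.cons.injEq] at h
      exact Or.inr ⟨s', t, h.2⟩
  · rintro (⟨rfl, t, rfl⟩ | ⟨s, t, rfl⟩)
    · exact ⟨[], t, rfl⟩
    · exact ⟨a :: s, t, rfl⟩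

lemma win_of_tail {a : α} {l : List α} {x y z : α} (h : Win l x y z) : Win (a :: l) x y z :=
  win_cons.mpr (Or.inr h)

lemma win_head {a b c : α} {l : List α} : Win (a :: b :: c :: l) a b c := ⟨[], l, rfl⟩

lemma not_win_short {l : List α} {x y z : α} (h : l.length < 3) : ¬ Win l x y z := by
  rintro ⟨s, t, rfl⟩
  simp [List.length_append] at h
  omega

lemma chain'_win {R : α → α → Prop} {l : List α} {x y z : α}
    (hc : List.Chain' R l) (hw : Win l x y z) : R x y ∧ R y z := by
  obtain ⟨s, t, rfl⟩ := hw
  have h2 : List.Chain' R (x :: y :: z :: t) := hc.suffix ⟨s, rfl⟩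
  exact ⟨(List.isChain_cons_cons.mp h2).1, (List.isChain_cons_cons.mp (List.isChain_cons_cons.mp h2).2).1⟩

lemma mem_win : ∀ (l : List α) (x : α), x ∈ l →
    l.head? = some x ∨ l.getLast? = some x ∨ ∃ u v, Win l u x v := by
  intro l
  induction l with
  | nil => simp
  | cons a t ih =>
    intro x hx
    rcases List.mem_cons.mp hx with rfl | hx
    · exact Or.inl rfl
    · rcases ih x hx with h | h | ⟨u, v, hw⟩
      · cases t with
        | nil => simp at hx
        | cons b t' =>
          obtain rfl : b = x := by simpa using h
          cases t' with
          | nil => exact Or.inr (Or.inl rfl)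
          | cons c t'' => exact Or.inr (Or.inr ⟨a, c, ⟨[], t'', rfl⟩⟩)
      · cases t with
        | nil => simp at hx
        | cons b t' => exact Or.inr (Or.inl (by rw [List.getLast?_cons_cons]; exact h))
      · exact Or.inr (Or.inr ⟨u, v, win_of_tail hw⟩)

lemma getLast?_eq_append {l : List α} {j : α} (h : l.getLast? = some j) :
    ∃ u, l = u ++ [j] := by
  induction l with
  | nil => simp at h
  | cons a t ih =>
    cases t with
    | nil => simp_all
    | cons b t' =>
      rw [List.getLast?_cons_cons] at h
      obtain ⟨u, hu⟩ := ih h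
      exact ⟨a :: u, by simp [hu]⟩

lemma length_ge_two {l : List α} {i j : α} (hh : l.head? = some i)
    (hl : l.getLast? = some j) (hij : i ≠ j) : 2 ≤ l.length := by
  cases l with
  | nil => simp at hh
  | cons a t =>
    cases t with
    | nil =>
      simp at hh hl
      subst hh; subst hl
      exact absurd rfl hij
    | cons b t' => simp only [List.length_cons]; omega

lemma win_mem {l : List α} {x y z : α} (h : Win l x y z) : y ∈ l := by
  obtain ⟨s, t, rfl⟩ := h; simp

lemma win_ne {l : List α} {x y z : α} (h : Win l x y z) (hnd : l.Nodup) : x ≠ z := by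
  obtain ⟨s, t, rfl⟩ := h
  have h3 : (x :: y :: z :: t).Nodup :=
    List.Nodup.sublist (List.sublist_append_right s _) hnd
  rintro rfl
  exact (List.nodup_cons.mp h3).1 (by simp)

lemma win_mem_tail {l : List α} {x y z : α} (h : Win l x y z) : y ∈ l.tail := by
  obtain ⟨s, t, rfl⟩ := h
  cases s <;> simp

lemma win_ne_head {l : List α} {x y z i : α} (h : Win l x y z) (hnd : l.Nodup)
    (hh : l.head? = some i) : y ≠ i := by
  cases l with
  | nil => simp at hh
  | cons a t =>
    obtain rfl : a = i := by simpa using hh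
    have hy : y ∈ t := win_mem_tail h
    have ha : _ ∉ t := (List.nodup_cons.mp hnd).1
    rintro rfl; exact ha hy

lemma win_mem_dropLast {l : List α} {x y z : α} (h : Win l x y z) : y ∈ l.dropLast := by
  obtain ⟨s, t, rfl⟩ := h
  have : s ++ x :: y :: z :: t = (s ++ [x, y]) ++ (z :: t) := by simp
  rw [this, List.dropLast_append_of_ne_nil (by simp)]
  simp

lemma win_ne_last {l : List α} {x y z j : α} (h : Win l x y z) (hnd : l.Nodup)
    (hl : l.getLast? = some j) : y ≠ j := by
  obtain ⟨u, rfl⟩ := getLast?_eq_append hl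
  have hy : y ∈ u := by
    have := win_mem_dropLast h
    rwa [List.dropLast_concat] at this
  have : j ∉ u := by
    have := List.nodup_append'.mp hnd
    intro hj; exact this.2.2 hj (by simp)
  rintro rfl; exact this hy

end ListAux

namespace MixedGraph
variable {V : Type*}

section
variable (H : MixedGraph V) (C : Set V)

/-- Invariant for surgery: every inner node is in `C`, or has a tail towards a
neighbour on the path, or a tail towards some node of `C`. -/
def inv3 : List V → Prop
  | a :: b :: c :: r =>
      (b ∈ C ∨ H.tailAt b a ∨ H.tailAt b c ∨ ∃ x ∈ C, H.tailAt b x) ∧ inv3 (b :: c :: r)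
  | _ => True

open Classical in
noncomputable def badCount : List V → ℕ
  | [] => 0
  | a :: r => (if a ∈ C then 0 else 1) + badCount r

end

variable {H : MixedGraph V} {C : Set V}

lemma inv3_tail : ∀ {l : List V}, H.inv3 C l → H.inv3 C l.tail
  | [], _ => trivial
  | [_], _ => trivial
  | [_, _], _ => trivial
  | _ :: _ :: _ :: _, h => h.2

open Classical in
lemma badCount_cons (a : V) (r : List V) :
    badCount C (a :: r) = (if a ∈ C then 0 else 1) + badCount C r := rfl

lemma badCount_cons_in {a : V} (h : a ∈ C) (r : List V) :
    badCount C (a :: r) = badCount C r := by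
  rw [badCount_cons, if_pos h, Nat.zero_add]

lemma badCount_cons_notin {a : V} (h : a ∉ C) (r : List V) :
    badCount C (a :: r) = badCount C r + 1 := by
  rw [badCount_cons, if_neg h, Nat.add_comm]

lemma badCount_tail_le (a : V) (r : List V) : badCount C r ≤ badCount C (a :: r) := by
  rw [badCount_cons]; exact Nat.le_add_left _ _

lemma badCount_cons_le {a : V} {r₁ r₂ : List V} (h : badCount C r₁ ≤ badCount C r₂) :
    badCount C (a :: r₁) ≤ badCount C (a :: r₂) := by
  rw [badCount_cons, badCount_cons]; exact Nat.add_le_add_left h _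

lemma badCount_cons_lt {a : V} {r₁ r₂ : List V} (h : badCount C r₁ < badCount C r₂) :
    badCount C (a :: r₁) < badCount C (a :: r₂) := by
  rw [badCount_cons, badCount_cons]; exact Nat.add_lt_add_left h _

lemma inv3_of_innerOK (hA : H.isAncestral) (hU : ¬ ∃ i j k, H.unshieldedNonCollider i j k) :
    ∀ p : List V, List.Chain' H.adj p → H.innerOK C p → H.inv3 C p
  | [], _, _ => trivial
  | [_], _, _ => trivial
  | [_, _], _, _ => trivial
  | a :: b :: c :: r, hch, hok => by
    have hab : H.adj a b := (List.isChain_cons_cons.mp hch).1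
    have hch2 := (List.isChain_cons_cons.mp hch).2
    have hbc : H.adj b c := (List.isChain_cons_cons.mp hch2).1
    constructor
    · by_cases hcol : H.collider a b c
      · rcases hok.1.1 hcol with hbC | ⟨x, hxC, hanc⟩
        · exact Or.inl hbC
        · by_cases hbx : b = x
          · exact Or.inl (hbx ▸ hxC)
          · exact Or.inr (Or.inr (Or.inr ⟨x, hxC, L3 hA hU hanc hbx⟩))
      · rcases not_and_or.mp hcol with h | h
        · exact Or.inr (Or.inl (tailAt_of_not_head (adj_symm hab) h))
        · exact Or.inr (Or.inr (Or.inl (tailAt_of_not_head hbc h)))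
    · exact inv3_of_innerOK hA hU (b :: c :: r) hch2 hok.2

/-- Reachability by a skeleton walk whose inner nodes are in `C`. -/
inductive RC (H : MixedGraph V) (C : Set V) : V → V → Prop
  | base {i j : V} : H.adj i j → RC H C i j
  | step {i x j : V} : H.adj i x → x ∈ C → RC H C x j → RC H C i j

lemma main_A (hA : H.isAncestral) (hU : ¬ ∃ i j k, H.unshieldedNonCollider i j k) :
    ∀ n : ℕ, ∀ p : List V, ∀ i j : V,
      p.length + badCount C p ≤ n → List.Chain' H.adj p → H.inv3 C p →
      p.head? = some i → p.getLast? = some j → i ≠ j → RC H C i j := by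
  intro n
  induction n with
  | zero =>
    intro p i j hn _ _ hh _ _
    cases p with
    | nil => simp at hh
    | cons a t => simp only [List.length_cons] at hn; omega
  | succ n ih =>
    intro p i j hn hch hinv hh hl hij
    cases p with
    | nil => simp at hh
    | cons a t =>
      obtain rfl : i = a := (show a = i by simpa using hh).symm
      cases t with
      | nil => exact absurd (by simpa using hl) hij
      | cons w t2 =>
        cases t2 with
        | nil =>
          obtain rfl : w = j := by simpa using hl
          exact RC.base (List.isChain_cons_cons.mp hch).1
        | cons c rest =>
          have hiw : H.adj i w := (List.isChain_cons_cons.mp hch).1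
          have hch2 : List.Chain' H.adj (w :: c :: rest) := (List.isChain_cons_cons.mp hch).2
          have hwc : H.adj w c := (List.isChain_cons_cons.mp hch2).1
          have hl2 : (w :: c :: rest).getLast? = some j := by
            rwa [List.getLast?_cons_cons] at hl
          have hl3 : (c :: rest).getLast? = some j := by
            rwa [List.getLast?_cons_cons] at hl2
          simp only [List.length_cons] at hn
          by_cases hwC : w ∈ C
          · by_cases hwj : w = j
            · subst hwj; exact RC.base hiw
            · refine RC.step hiw hwC (ih (w :: c :: rest) w j ?_ hch2 hinv.2 rfl hl2 hwj)
              have := badCount_tail_le (C := C) i (w :: c :: rest)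
              simp only [List.length_cons]
              omega
          · by_cases hci : c = i
            · -- contraction: recurse on the suffix `c :: rest`
              refine ih (c :: rest) i j ?_ hch2.tail (inv3_tail (inv3_tail hinv)) ?_ hl3 hij
              · have h1 : badCount C (c :: rest) ≤ badCount C (w :: c :: rest) :=
                  badCount_tail_le _ _
                have h2 : badCount C (w :: c :: rest) ≤ badCount C (i :: w :: c :: rest) :=
                  badCount_tail_le _ _
                simp only [List.length_cons]
                omega
              · simp [hci]
            · -- c ≠ i : two shortening cases and a substitution case
              have case_b : H.tailAt w i → RC H C i j := by
                intro htwi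
                have hadj_ci : H.adj c i := L1 hA hU htwi (adj_symm hwc) hci
                have hic : H.adj i c := adj_symm hadj_ci
                have hfix : H.tailAt c w → H.tailAt c i := fun h => L2 hA hU h htwi hci
                refine ih (i :: c :: rest) i j ?_
                  (List.isChain_cons_cons.mpr ⟨hic, hch2.tail⟩) ?_ rfl ?_ hij
                · have h2 : badCount C (i :: c :: rest) ≤ badCount C (i :: w :: c :: rest) :=
                    badCount_cons_le (badCount_tail_le _ _)
                  simp only [List.length_cons]
                  omega
                · cases rest with
                  | nil => trivial
                  | cons r0 r' =>
                    refine ⟨?_, hinv.2.2⟩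
                    rcases hinv.2.1 with h | h | h | h
                    · exact Or.inl h
                    · exact Or.inr (Or.inl (hfix h))
                    · exact Or.inr (Or.inr (Or.inl h))
                    · exact Or.inr (Or.inr (Or.inr h))
                · rwa [List.getLast?_cons_cons]
              have case_a : H.tailAt w c → RC H C i j := by
                intro htwc
                have hic : H.adj i c := L1 hA hU htwc hiw (Ne.symm hci)
                have hfix : H.tailAt c w → H.tailAt c i := fun h => by
                  have hlwc : H.line w c := line_of_tails hA htwc h
                  exact line_tail hA (H.line_symm _ _ hlwc) (adj_symm hic)
                refine ih (i :: c :: rest) i j ?_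
                  (List.isChain_cons_cons.mpr ⟨hic, hch2.tail⟩) ?_ rfl ?_ hij
                · have h2 : badCount C (i :: c :: rest) ≤ badCount C (i :: w :: c :: rest) :=
                    badCount_cons_le (badCount_tail_le _ _)
                  simp only [List.length_cons]
                  omega
                · cases rest with
                  | nil => trivial
                  | cons r0 r' =>
                    refine ⟨?_, hinv.2.2⟩
                    rcases hinv.2.1 with h | h | h | h
                    · exact Or.inl h
                    · exact Or.inr (Or.inl (hfix h))
                    · exact Or.inr (Or.inr (Or.inl h))
                    · exact Or.inr (Or.inr (Or.inr h))
                · rwa [List.getLast?_cons_cons]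
              rcases hinv.1 with hbC | htwi | htwc | ⟨x, hxC, htx⟩
              · exact absurd hbC hwC
              · exact case_b htwi
              · exact case_a htwc
              · by_cases hxi : x = i
                · exact case_b (hxi ▸ htx)
                · by_cases hxc : x = c
                  · exact case_a (hxc ▸ htx)
                  · -- genuine substitution of `w` by `x`
                    have hix : H.adj i x := L1 hA hU htx hiw (fun h => hxi h.symm)
                    have hcx : H.adj c x := L1 hA hU htx (adj_symm hwc) (fun h => hxc h.symm)
                    have hfix : H.tailAt c w → H.tailAt c x := fun h => L2 hA hU h htx (fun h' => hxc h'.symm)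
                    refine ih (i :: x :: c :: rest) i j ?_
                      (List.isChain_cons_cons.mpr ⟨hix,
                        List.isChain_cons_cons.mpr ⟨adj_symm hcx, hch2.tail⟩⟩) ?_ rfl ?_ hij
                    · have h1 : badCount C (x :: c :: rest) < badCount C (w :: c :: rest) := by
                        rw [badCount_cons_in hxC, badCount_cons_notin hwC]
                        omega
                      have h2 : badCount C (i :: x :: c :: rest)
                          < badCount C (i :: w :: c :: rest) := badCount_cons_lt h1
                      simp only [List.length_cons]
                      omega
                    · refine ⟨Or.inl hxC, ?_⟩
                      cases rest with
                      | nil => trivial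
                      | cons r0 r' =>
                        refine ⟨?_, hinv.2.2⟩
                        rcases hinv.2.1 with h | h | h | h
                        · exact Or.inl h
                        · exact Or.inr (Or.inl (hfix h))
                        · exact Or.inr (Or.inr (Or.inl h))
                        · exact Or.inr (Or.inr (Or.inr h))
                    · rw [List.getLast?_cons_cons, List.getLast?_cons_cons]
                      exact hl3

end MixedGraph

section ListAux2
variable {α : Type*} {R : α → α → Prop}

lemma dedup_chain :
    ∀ (n : ℕ) (l : List α), l.length ≤ n → List.Chain' R l →
      ∃ m : List α, m.Nodup ∧ List.Chain' R m ∧ m.head? = l.head? ∧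
        m.getLast? = l.getLast? ∧ ∀ x ∈ m, x ∈ l := by
  intro n
  induction n with
  | zero =>
    intro l hn _
    cases l with
    | nil => exact ⟨[], by simp [List.Chain']⟩
    | cons a t => simp at hn
  | succ n ih =>
    intro l hn hch
    cases l with
    | nil => exact ⟨[], by simp [List.Chain']⟩
    | cons a t =>
      by_cases ha : a ∈ t
      · obtain ⟨t1, t2, rfl⟩ := List.append_of_mem ha
        have hsuf : (a :: t2) <:+ (a :: (t1 ++ a :: t2)) := ⟨a :: t1, by simp⟩
        have hch2 := hch.suffix hsuf
        have hlen : (a :: t2).length ≤ n := by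
          simp only [List.length_cons, List.length_append] at hn ⊢
          omega
        obtain ⟨m, h1, h2, h3, h4, h5⟩ := ih (a :: t2) hlen hch2
        refine ⟨m, h1, h2, by simpa using h3, ?_, ?_⟩
        · rw [h4]
          have e2 : a :: (t1 ++ a :: t2) = (a :: t1) ++ (a :: t2) := by simp
          rw [e2, List.getLast?_append_of_ne_nil _ (by simp)]
        · intro x hx
          have := h5 x hx
          rcases List.mem_cons.mp this with rfl | hx2
          · exact List.mem_cons_self
          · exact List.mem_cons_of_mem _ (by simp [hx2])
      · obtain ⟨m, h1, h2, h3, h4, h5⟩ := ih t (by simpa using hn) hch.tail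
        refine ⟨a :: m, ?_, ?_, by simp, ?_, ?_⟩
        · exact List.nodup_cons.mpr ⟨fun h => ha (h5 a h), h1⟩
        · refine List.isChain_cons.mpr ⟨?_, h2⟩
          intro y hy
          rw [h3] at hy
          exact (List.isChain_cons.mp hch).1 y hy
        · cases t with
          | nil =>
            have : m = [] := by
              cases m with
              | nil => rfl
              | cons b m' => exact absurd (h5 b (by simp)) (by simp)
            subst this
            rfl
          | cons b t' =>
            cases m with
            | nil => simp at h3
            | cons b' m' =>
              obtain rfl : b' = b := by simpa using h3
              rw [List.getLast?_cons_cons, List.getLast?_cons_cons]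
              exact h4
        · intro x hx
          rcases List.mem_cons.mp hx with rfl | hx
          · exact List.mem_cons_self
          · exact List.mem_cons_of_mem _ (h5 x hx)

end ListAux2

namespace MixedGraph
variable {V : Type*} {H : MixedGraph V} {C : Set V}

lemma innerOK_of_win {G : MixedGraph V} {C : Set V} :
    ∀ p : List V, (∀ x y z, Win p x y z →
      ((G.collider x y z → y ∈ C ∨ ∃ w ∈ C, G.anc y w) ∧ (¬ G.collider x y z → y ∉ C))) →
      G.innerOK C p
  | [], _ => trivial
  | [_], _ => trivial
  | [_, _], _ => trivial
  | a :: b :: c :: r, h =>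
    ⟨h a b c win_head,
      innerOK_of_win (b :: c :: r) (fun x y z hw => h x y z (win_of_tail hw))⟩

lemma innerOK_win {G : MixedGraph V} {C : Set V} :
    ∀ p : List V, G.innerOK C p → ∀ x y z, Win p x y z →
      ((G.collider x y z → y ∈ C ∨ ∃ w ∈ C, G.anc y w) ∧ (¬ G.collider x y z → y ∉ C))
  | a :: b :: c :: r, hok, x, y, z, hw => by
    rcases win_cons.mp hw with ⟨rfl, t, ht⟩ | hw'
    · obtain ⟨rfl, rfl, rfl⟩ : b = y ∧ c = z ∧ r = t := by simpa using ht
      exact hok.1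
    · exact innerOK_win (b :: c :: r) hok.2 x y z hw'
  | [], _, x, y, z, hw => absurd hw (not_win_short (by simp))
  | [_], _, x, y, z, hw => absurd hw (not_win_short (by simp))
  | [_, _], _, x, y, z, hw => absurd hw (not_win_short (by simp))

lemma RC_to_list {i j : V} (h : RC H C i j) :
    ∃ l : List V, List.Chain' H.adj l ∧ l.head? = some i ∧ l.getLast? = some j ∧
      ∀ x ∈ l, x = i ∨ x ∈ C ∨ x = j := by
  induction h with
  | @base i j hadj =>
    refine ⟨[i, j], List.isChain_pair.mpr hadj, rfl, by simp, ?_⟩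
    intro x hx
    rcases List.mem_cons.mp hx with rfl | hx
    · exact Or.inl rfl
    · obtain rfl : x = j := by simpa using hx
      exact Or.inr (Or.inr rfl)
  | @step i x j hadj hxC _ ih =>
    obtain ⟨l, hch, hh, hl, hmem⟩ := ih
    refine ⟨i :: l, ?_, rfl, ?_, ?_⟩
    · refine List.isChain_cons.mpr ⟨?_, hch⟩
      intro y hy
      rw [hh] at hy
      obtain rfl : x = y := by simpa using hy
      exact hadj
    · cases l with
      | nil => simp at hh
      | cons b t => rw [List.getLast?_cons_cons]; exact hl
    · intro y hy
      rcases List.mem_cons.mp hy with rfl | hy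
      · exact Or.inl rfl
      · rcases hmem y hy with rfl | h | rfl
        · exact Or.inr (Or.inl hxC)
        · exact Or.inr (Or.inl h)
        · exact Or.inr (Or.inr rfl)

/-- The bidirected graph with the same skeleton as `H`. -/
def bidir (H : MixedGraph V) : MixedGraph V where
  line _ _ := False
  arrow _ _ := False
  arc := H.adj
  line_symm := fun _ _ h => h
  arc_symm := fun _ _ h => adj_symm h
  line_irrefl := fun _ h => h
  arrow_irrefl := fun _ h => h
  arc_irrefl := fun _ h => adj_ne h rfl

lemma bidir_isBG : (bidir H).isBG :=
  ⟨fun _ _ h => h, fun _ _ h => h⟩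

lemma bidir_adj {i j : V} : (bidir H).adj i j ↔ H.adj i j := by
  simp [adj, bidir]

lemma bidir_anc {i j : V} (h : (bidir H).anc i j) : i = j := by
  induction h with
  | refl => rfl
  | tail _ hstep _ => exact hstep.elim

lemma bidir_collider {a b c : V} (h1 : H.adj a b) (h2 : H.adj b c) :
    (bidir H).collider a b c :=
  ⟨Or.inr h1, Or.inr (adj_symm h2)⟩

lemma bpath_of_RC {i j : V} (hij : i ≠ j) (h : RC H C i j) :
    ∃ q, (bidir H).mConnecting C i j q := by
  obtain ⟨l, hch, hh, hl, hmem⟩ := RC_to_list h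
  obtain ⟨m, hnd, hch', hh', hl', hsub⟩ := dedup_chain l.length l le_rfl hch
  rw [hh] at hh'
  rw [hl] at hl'
  refine ⟨m, ⟨hnd, List.IsChain.imp (fun _ _ hab => bidir_adj.mpr hab) hch'⟩,
    length_ge_two hh' hl' hij, hh', hl', ?_⟩
  refine innerOK_of_win m ?_
  intro x y z hw
  have hyC : y ∈ C := by
    rcases hmem y (hsub y (win_mem hw)) with rfl | hmemC | rfl
    · exact absurd rfl (win_ne_head hw hnd hh')
    · exact hmemC
    · exact absurd rfl (win_ne_last hw hnd hl')
  constructor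
  · intro _; exact Or.inl hyC
  · intro hnc
    have hadj := chain'_win hch' hw
    exact (hnc (bidir_collider hadj.1 hadj.2)).elim

lemma main_B (hU : ¬ ∃ i j k, H.unshieldedNonCollider i j k) :
    ∀ (n : ℕ) (p : List V) (i j : V), p.length ≤ n → p.Nodup →
      List.Chain' H.adj p → p.head? = some i → p.getLast? = some j → i ≠ j →
      (∀ x ∈ p, x = i ∨ x ∈ C ∨ x = j) → ∃ q, H.mConnecting C i j q := by
  intro n
  induction n with
  | zero =>
    intro p i j hn _ _ hh _ _ _
    cases p with
    | nil => simp at hh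
    | cons a t => simp at hn
  | succ n ih =>
    intro p i j hn hnd hch hh hl hij hmem
    by_cases hsh : ∃ x y z, Win p x y z ∧ H.adj x z
    · obtain ⟨x, y, z, ⟨s, t, rfl⟩, hxz⟩ := hsh
      have hsub : (s ++ x :: z :: t).Sublist (s ++ x :: y :: z :: t) :=
        List.Sublist.append_left
          (List.Sublist.cons₂ x (List.Sublist.cons y (List.Sublist.refl (z :: t)))) s
      have hchs := List.isChain_append.mp hch
      have hch4 := List.isChain_cons_cons.mp hchs.2.1
      have hch5 := List.isChain_cons_cons.mp hch4.2
      have hchq : List.Chain' H.adj (s ++ x :: z :: t) := by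
        refine List.isChain_append.mpr ⟨hchs.1, List.isChain_cons_cons.mpr ⟨hxz, hch5.2⟩, ?_⟩
        intro a ha b hb
        exact hchs.2.2 a ha b (by simpa using hb)
      have hhq : (s ++ x :: z :: t).head? = some i := by
        cases s with
        | nil => simpa using hh
        | cons a s' => simpa using hh
      have hlq : (s ++ x :: z :: t).getLast? = some j := by
        have e1 : s ++ x :: z :: t = (s ++ [x]) ++ (z :: t) := by simp
        have e2 : s ++ x :: y :: z :: t = (s ++ [x, y]) ++ (z :: t) := by simp
        rw [e2, List.getLast?_append_of_ne_nil _ (by simp)] at hl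
        rw [e1, List.getLast?_append_of_ne_nil _ (by simp)]
        exact hl
      refine ih (s ++ x :: z :: t) i j ?_ (List.Nodup.sublist hsub hnd) hchq hhq hlq hij ?_
      · simp only [List.length_append, List.length_cons] at hn ⊢
        omega
      · intro v hv
        exact hmem v (hsub.subset hv)
    · push_neg at hsh
      refine ⟨p, ⟨hnd, hch⟩, length_ge_two hh hl hij, hh, hl, ?_⟩
      refine innerOK_of_win p ?_
      intro x y z hw
      have hadj := chain'_win hch hw
      have hcol : H.collider x y z := by
        by_contra hnc
        exact hU ⟨x, y, z, hadj.1, hadj.2, win_ne hw hnd, hsh x y z hw, hnc⟩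
      have hyC : y ∈ C := by
        rcases hmem y (win_mem hw) with rfl | hmemC | rfl
        · exact absurd rfl (win_ne_head hw hnd hh)
        · exact hmemC
        · exact absurd rfl (win_ne_last hw hnd hl)
      exact ⟨fun _ => Or.inl hyC, fun hnc => (hnc hcol).elim⟩

end MixedGraph

/-- A maximal ancestral graph is Markov equivalent to some bidirected graph
iff it contains no unshielded non-collider V-configuration. -/
theorem mag_equiv_some_bg_iff {V : Type*} [Fintype V] (H : MixedGraph V)
    (hH : H.isMAG) :
    (∃ B : MixedGraph V, B.isBG ∧ H.markovEquiv B) ↔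
      ¬ ∃ i j k, H.unshieldedNonCollider i j k := by
  open MixedGraph in
  obtain ⟨hA, hMax⟩ := hH
  constructor
  · rintro ⟨B, ⟨hBarr, hBline⟩, hequiv⟩ ⟨i, j, k, hij, hjk, hik_ne, hik, hnc⟩
    have harc : ∀ u v, B.adj u v → B.arc u v := by
      intro u v h
      rcases h with h | h | h | h
      · exact (hBline u v h).elim
      · exact (hBarr u v h).elim
      · exact (hBarr v u h).elim
      · exact h
    have hd1 : Disjoint ({i} : Set V) {k} := by
      simp [Set.disjoint_singleton_left, hik_ne]
    have h1 : ¬ H.mSep {i} {k} ∅ := by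
      intro hsep
      refine hsep ⟨i, k, [i, j, k], rfl, rfl, ?_⟩
      refine ⟨⟨by simp [adj_ne hij, adj_ne hjk, hik_ne], ?_⟩, by simp, rfl, by simp, ?_⟩
      · exact List.isChain_cons_cons.mpr ⟨hij, List.isChain_pair.mpr hjk⟩
      · exact ⟨⟨fun hc => (hnc hc).elim, fun _ => Set.notMem_empty j⟩, trivial⟩
    have h2 : ¬ B.mSep {i} {k} ∅ := fun hs =>
      h1 ((hequiv {i} {k} ∅ hd1 (by simp) (by simp)).mpr hs)
    have h3 : B.adj i k := by
      obtain ⟨i', k', p, hi', hk', hm⟩ := not_not.mp h2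
      obtain rfl : i' = i := hi'
      obtain rfl : k' = k := hk'
      obtain ⟨⟨hnd, hch⟩, hlen, hhp, hlp, hok⟩ := hm
      cases p with
      | nil => simp at hhp
      | cons a t =>
        obtain rfl : i' = a := (by simpa using hhp : a = i').symm
        cases t with
        | nil => simp at hlen
        | cons b t2 =>
          cases t2 with
          | nil =>
            obtain rfl : b = k' := by simpa using hlp
            exact (List.isChain_cons_cons.mp hch).1
          | cons c r =>
            exfalso
            have hab : B.adj i' b := (List.isChain_cons_cons.mp hch).1
            have hbc : B.adj b c := (List.isChain_cons_cons.mp (List.isChain_cons_cons.mp hch).2).1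
            have hcol : B.collider i' b c :=
              ⟨Or.inr (harc _ _ hab), Or.inr (B.arc_symm _ _ (harc _ _ hbc))⟩
            rcases hok.1.1 hcol with hb | ⟨x, hx, _⟩
            · exact Set.notMem_empty _ hb
            · exact Set.notMem_empty _ hx
    obtain ⟨C, hiC, hkC, hsep⟩ := hMax i k hik_ne hik
    have hsepB : B.mSep {i} {k} C :=
      (hequiv {i} {k} C hd1 (Set.disjoint_singleton_left.mpr hiC)
        (Set.disjoint_singleton_left.mpr hkC)).mp hsep
    refine hsepB ⟨i, k, [i, k], rfl, rfl,
      ⟨⟨by simp [hik_ne], List.isChain_pair.mpr h3⟩, by simp, rfl, by simp, trivial⟩⟩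
  · intro hU
    refine ⟨bidir H, bidir_isBG, ?_⟩
    intro A B' C dAB dAC dBC
    refine not_congr ⟨?_, ?_⟩
    · rintro ⟨i, j, p, hiA, hjB, ⟨⟨hnd, hch⟩, hlen, hh, hl, hok⟩⟩
      have hij : i ≠ j := fun h => Set.disjoint_left.mp dAB hiA (h ▸ hjB)
      have hinv := inv3_of_innerOK hA hU p hch hok
      have hrc := main_A hA hU (p.length + badCount C p) p i j le_rfl hch hinv hh hl hij
      obtain ⟨q, hq⟩ := bpath_of_RC hij hrc
      exact ⟨i, j, q, hiA, hjB, hq⟩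
    · rintro ⟨i, j, p, hiA, hjB, ⟨⟨hnd, hch⟩, hlen, hh, hl, hok⟩⟩
      have hij : i ≠ j := fun h => Set.disjoint_left.mp dAB hiA (h ▸ hjB)
      have hchH : List.Chain' H.adj p := List.IsChain.imp (fun _ _ h => bidir_adj.mp h) hch
      have hmem : ∀ x ∈ p, x = i ∨ x ∈ C ∨ x = j := by
        intro x hx
        rcases mem_win p x hx with h | h | ⟨u, v, hw⟩
        · exact Or.inl (Option.some.inj (hh.symm.trans h)).symm
        · exact Or.inr (Or.inr (Option.some.inj (hl.symm.trans h)).symm)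
        · have hadj := chain'_win hchH hw
          have hcol := bidir_collider hadj.1 hadj.2
          rcases (innerOK_win p hok u x v hw).1 hcol with hxC | ⟨w, hwC, hanc⟩
          · exact Or.inr (Or.inl hxC)
          · refine Or.inr (Or.inl ?_)
            rw [bidir_anc hanc]
            exact hwC
      obtain ⟨q, hq⟩ := main_B hU p.length p i j le_rfl hnd hchH hh hl hij hmem
      exact ⟨i, j, q, hiA, hjB, hq⟩
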